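/- Rank-one perturbation lemma: Let M = x yᵀ be a real n×n rank-1 diagonalizable matrix with μ = ⟨x,y⟩ ≠ 0, and let H be any real n×n matrix. Set ε = 2‖x‖²‖y‖² μ⁻² ‖H‖. Then every eigenvalue of M + H lies in B(0,ε) ∪ B(μ,ε). -/

import Mathlib

/-- Operator norm of a real matrix induced by the Euclidean norm. -/
noncomputable def opNormR {n : ℕ} (A : Matrix (Fin n) (Fin n) ℝ) : ℝ :=
  ‖Matrix.toEuclideanCLM (𝕜 := ℝ) A‖

/-- Euclidean norm of a real vector. -/
noncomputable def eNorm {n : ℕ} (v : Fin n → ℝ) : ℝ :=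
  Real.sqrt (∑ i, v i ^ 2)

open Complex

local notation "⟪" x ", " y "⟫" => @inner ℂ _ _ x y

lemma pyth_sub {E : Type*} [NormedAddCommGroup E] [InnerProductSpace ℂ E]
    (u v₁ : E) (c : ℂ) (h : ⟪u, v₁⟫ = 0) :
    ‖v₁ - c • u‖ ^ 2 = ‖v₁‖ ^ 2 + ‖c • u‖ ^ 2 := by
  simp only [pow_two, sub_eq_add_neg]
  rw [norm_add_sq_eq_norm_sq_add_norm_sq_of_inner_eq_zero (𝕜 := ℂ)]
  · simp [pow_two]
  · rw [inner_neg_right, inner_smul_right]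
    rw [← inner_conj_symm, h]
    simp

lemma oblique_norm_le {E : Type*} [NormedAddCommGroup E] [InnerProductSpace ℂ E]
    (u w : E) (μ : ℂ) (hμ : ⟪w, u⟫ = μ) (hμ0 : μ ≠ 0) (v : E) :
    ‖v - (μ⁻¹ * ⟪w, v⟫) • u‖ ≤ (‖u‖ * ‖w‖ / ‖μ‖) * ‖v‖ := by
  have hu : u ≠ 0 := by
    rintro rfl
    rw [inner_zero_right] at hμ
    exact hμ0 hμ.symm
  set d : ℂ := ⟪u, u⟫ with hd
  have hd2 : d = (‖u‖ : ℂ) ^ 2 := inner_self_eq_norm_sq_to_K u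
  have hu0 : ‖u‖ ≠ 0 := norm_ne_zero_iff.mpr hu
  have hu0' : (0:ℝ) < ‖u‖ := norm_pos_iff.mpr hu
  have hμn : (0:ℝ) < ‖μ‖ := norm_pos_iff.mpr hμ0
  have hd0 : d ≠ 0 := by
    rw [hd2]; exact pow_ne_zero 2 (by exact_mod_cast hu0)
  set v₁ : E := v - (⟪u, v⟫ / d) • u with hv₁
  set w₁ : E := w - (⟪u, w⟫ / d) • u with hw₁
  have huv₁ : ⟪u, v₁⟫ = 0 := by
    simp [hv₁, inner_sub_right, inner_smul_right, ← hd, div_mul_cancel₀ _ hd0]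
    rw [← hd2, div_mul_cancel₀ _ hd0, sub_self]
  have huw₁ : ⟪u, w₁⟫ = 0 := by
    simp [hw₁, inner_sub_right, inner_smul_right, ← hd, div_mul_cancel₀ _ hd0]
    rw [← hd2, div_mul_cancel₀ _ hd0, sub_self]
  have hw₁u : ⟪w₁, u⟫ = 0 := by
    rw [← inner_conj_symm, huw₁, map_zero]
  have hconj : ⟪u, w⟫ = starRingEnd ℂ μ := by rw [← hμ, ← inner_conj_symm]
  have hdconj : starRingEnd ℂ d = d := by
    rw [hd2]; simp [← Complex.ofReal_pow]
  have hwv : ⟪w, v⟫ = ⟪w₁, v₁⟫ + μ * ⟪u, v⟫ / d := by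
    have h1 : ⟪w₁, v⟫ = ⟪w₁, v₁⟫ := by
      simp [hv₁, inner_sub_right, inner_smul_right, hw₁u]
    have hw' : w = w₁ + (⟪u, w⟫ / d) • u := by simp [hw₁]
    rw [show (⟪w,v⟫) = ⟪w₁ + (⟪u, w⟫ / d) • u, v⟫ by rw [← hw']]
    rw [inner_add_left, inner_smul_left, h1, map_div₀, hconj, hdconj]
    ring_nf
    rw [Complex.conj_conj]
    ring
  have hkey : v - (μ⁻¹ * ⟪w, v⟫) • u = v₁ - (μ⁻¹ * ⟪w₁, v₁⟫) • u := by
    rw [hwv, hv₁, mul_add, add_smul]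
    have : μ⁻¹ * (μ * ⟪u, v⟫ / d) = ⟪u, v⟫ / d := by field_simp
    rw [this]
    abel
  -- norms of pieces
  have hvsq : ‖v‖ ^ 2 = ‖v₁‖ ^ 2 + ‖(⟪u, v⟫ / d) • u‖ ^ 2 := by
    have : v = v₁ - (-(⟪u, v⟫ / d)) • u := by rw [hv₁]; simp
    calc ‖v‖ ^ 2 = ‖v₁ - (-(⟪u, v⟫ / d)) • u‖ ^ 2 := by rw [← this]
      _ = ‖v₁‖ ^ 2 + ‖(-(⟪u, v⟫ / d)) • u‖ ^ 2 := pyth_sub u v₁ _ huv₁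
      _ = ‖v₁‖ ^ 2 + ‖(⟪u, v⟫ / d) • u‖ ^ 2 := by rw [neg_smul, norm_neg]
  have hv₁le : ‖v₁‖ ≤ ‖v‖ := by
    nlinarith [norm_nonneg v₁, norm_nonneg v, sq_nonneg (‖(⟪u, v⟫ / d) • u‖)]
  have hwsq : ‖u‖ ^ 2 * ‖w‖ ^ 2 = ‖u‖ ^ 2 * ‖w₁‖ ^ 2 + ‖μ‖ ^ 2 := by
    have hw' : w = w₁ - (-(⟪u, w⟫ / d)) • u := by rw [hw₁]; simp
    have h2 : ‖w‖ ^ 2 = ‖w₁‖ ^ 2 + ‖(⟪u, w⟫ / d) • u‖ ^ 2 := by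
      calc ‖w‖ ^ 2 = ‖w₁ - (-(⟪u, w⟫ / d)) • u‖ ^ 2 := by rw [← hw']
        _ = ‖w₁‖ ^ 2 + ‖(-(⟪u, w⟫ / d)) • u‖ ^ 2 := pyth_sub u w₁ _ huw₁
        _ = ‖w₁‖ ^ 2 + ‖(⟪u, w⟫ / d) • u‖ ^ 2 := by rw [neg_smul, norm_neg]
    have h3 : ‖(⟪u, w⟫ / d) • u‖ = ‖μ‖ / ‖u‖ := by
      have hcn : ‖starRingEnd ℂ μ‖ = ‖μ‖ := RCLike.norm_conj μ
      rw [norm_smul, norm_div, hconj, hcn, hd2]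
      rw [show ‖((‖u‖:ℝ) : ℂ) ^ 2‖ = ‖u‖ ^ 2 by
        rw [norm_pow, Complex.norm_real, norm_norm]]
      field_simp
    rw [h2, h3]
    field_simp
  -- final computation
  have hWV : ‖⟪w₁, v₁⟫‖ ≤ ‖w₁‖ * ‖v₁‖ := norm_inner_le_norm w₁ v₁
  have hLsq : ‖v - (μ⁻¹ * ⟪w, v⟫) • u‖ ^ 2 ≤ (‖u‖ * ‖w‖ / ‖μ‖ * ‖v‖) ^ 2 := by
    rw [hkey, pyth_sub u v₁ _ huv₁]
    have h4 : ‖(μ⁻¹ * ⟪w₁, v₁⟫) • u‖ ^ 2 ≤ (‖w₁‖ * ‖v₁‖ * ‖u‖ / ‖μ‖) ^ 2 := by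
      rw [norm_smul, norm_mul, norm_inv]
      have : ‖μ‖⁻¹ * ‖⟪w₁, v₁⟫‖ * ‖u‖ ≤ ‖w₁‖ * ‖v₁‖ * ‖u‖ / ‖μ‖ := by
        rw [div_eq_mul_inv]
        have := mul_le_mul_of_nonneg_right (mul_le_mul_of_nonneg_right hWV (norm_nonneg u))
          (le_of_lt (inv_pos.mpr hμn))
        calc ‖μ‖⁻¹ * ‖⟪w₁, v₁⟫‖ * ‖u‖ = ‖⟪w₁, v₁⟫‖ * ‖u‖ * ‖μ‖⁻¹ := by ring
          _ ≤ ‖w₁‖ * ‖v₁‖ * ‖u‖ * ‖μ‖⁻¹ := this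
      exact pow_le_pow_left₀ (by positivity) this 2
    have h5 : ‖v₁‖ ^ 2 + (‖w₁‖ * ‖v₁‖ * ‖u‖ / ‖μ‖) ^ 2 ≤ (‖u‖ * ‖w‖ / ‖μ‖ * ‖v‖) ^ 2 := by
      have hμ2 : (0:ℝ) < ‖μ‖ ^ 2 := by positivity
      have e1 : ‖v₁‖ ^ 2 + (‖w₁‖ * ‖v₁‖ * ‖u‖ / ‖μ‖) ^ 2
          = (‖v₁‖ ^ 2 * ‖μ‖ ^ 2 + ‖w₁‖ ^ 2 * ‖v₁‖ ^ 2 * ‖u‖ ^ 2) / ‖μ‖ ^ 2 := by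
        field_simp [norm_ne_zero_iff.mpr hμ0]
      have e2 : (‖u‖ * ‖w‖ / ‖μ‖ * ‖v‖) ^ 2 = (‖u‖ ^ 2 * ‖w‖ ^ 2 * ‖v‖ ^ 2) / ‖μ‖ ^ 2 := by
        field_simp [norm_ne_zero_iff.mpr hμ0]
      rw [e1, e2, div_le_div_iff_of_pos_right hμ2]
      have hv2 : ‖v₁‖ ^ 2 ≤ ‖v‖ ^ 2 := pow_le_pow_left₀ (norm_nonneg _) hv₁le 2
      have t1 : ‖v₁‖ ^ 2 * ‖μ‖ ^ 2 ≤ ‖v‖ ^ 2 * ‖μ‖ ^ 2 :=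
        mul_le_mul_of_nonneg_right hv2 (sq_nonneg _)
      have t2 : ‖w₁‖ ^ 2 * ‖v₁‖ ^ 2 * ‖u‖ ^ 2 ≤ ‖w₁‖ ^ 2 * ‖v‖ ^ 2 * ‖u‖ ^ 2 := by
        have := mul_le_mul_of_nonneg_right hv2 (sq_nonneg ‖u‖)
        have := mul_le_mul_of_nonneg_left this (sq_nonneg ‖w₁‖)
        linarith [this]
      nlinarith [hwsq, sq_nonneg ‖v‖]
    linarith
  have hs := Real.sqrt_le_sqrt hLsq
  rwa [Real.sqrt_sq (norm_nonneg _), Real.sqrt_sq (by positivity)] at hs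

section plumbing
variable {n : ℕ}

noncomputable def cVec (v : Fin n → ℝ) : EuclideanSpace ℂ (Fin n) :=
  (WithLp.equiv 2 (Fin n → ℂ)).symm (fun i => (v i : ℂ))

lemma cVec_norm (v : Fin n → ℝ) : ‖cVec v‖ = eNorm v := by
  rw [EuclideanSpace.norm_eq, eNorm]
  congr 1
  apply Finset.sum_congr rfl
  intro i _
  simp only [cVec, WithLp.equiv_symm_apply, WithLp.ofLp_toLp, Complex.norm_real]
  rw [Real.norm_eq_abs, _root_.sq_abs]

lemma cVec_inner (v w : Fin n → ℝ) : ⟪cVec v, cVec w⟫ = ((∑ i, v i * w i : ℝ) : ℂ) := by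
  rw [PiLp.inner_apply]
  push_cast
  apply Finset.sum_congr rfl
  intro i _
  simp only [cVec, WithLp.equiv_symm_apply, WithLp.ofLp_toLp, RCLike.inner_apply, Complex.conj_ofReal]
  exact mul_comm _ _

lemma toEuclideanCLM_apply' (A : Matrix (Fin n) (Fin n) ℂ) (v : EuclideanSpace ℂ (Fin n)) :
    Matrix.toEuclideanCLM (𝕜 := ℂ) A v =
      (WithLp.equiv 2 (Fin n → ℂ)).symm (A.mulVec (WithLp.equiv 2 (Fin n → ℂ) v)) := by
  have := Matrix.toEuclideanCLM_toLp (𝕜 := ℂ) A (WithLp.equiv 2 (Fin n → ℂ) v)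
  simpa [Matrix.toLin'_apply] using this

end plumbing

section plumbing2
variable {n : ℕ}

noncomputable def rVec (v : Fin n → ℝ) : EuclideanSpace ℝ (Fin n) :=
  (WithLp.equiv 2 (Fin n → ℝ)).symm v

lemma rVec_norm_sq (v : Fin n → ℝ) : ‖rVec v‖ ^ 2 = ∑ i, v i ^ 2 := by
  rw [EuclideanSpace.norm_eq, Real.sq_sqrt (by positivity)]
  apply Finset.sum_congr rfl
  intro i _
  rw [rVec, WithLp.equiv_symm_apply, WithLp.ofLp_toLp, Real.norm_eq_abs, _root_.sq_abs]

lemma toEuclideanCLM_R_apply (A : Matrix (Fin n) (Fin n) ℝ) (v : Fin n → ℝ) :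
    Matrix.toEuclideanCLM (𝕜 := ℝ) A (rVec v) = rVec (A.mulVec v) := by
  exact Matrix.toEuclideanCLM_toLp (𝕜 := ℝ) A v

lemma mulVec_R_norm_le (A : Matrix (Fin n) (Fin n) ℝ) (v : Fin n → ℝ) :
    ‖rVec (A.mulVec v)‖ ≤ opNormR A * ‖rVec v‖ := by
  rw [← toEuclideanCLM_R_apply]
  exact (Matrix.toEuclideanCLM (𝕜 := ℝ) A).le_opNorm (rVec v)

lemma cMat_norm_le (A : Matrix (Fin n) (Fin n) ℝ) :
    ‖Matrix.toEuclideanCLM (𝕜 := ℂ) (A.map (Complex.ofReal ·))‖ ≤ opNormR A := by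
  apply ContinuousLinearMap.opNorm_le_bound _ (norm_nonneg _)
  intro v
  rw [toEuclideanCLM_apply']
  set g : Fin n → ℂ := WithLp.equiv 2 (Fin n → ℂ) v with hg
  set vr : Fin n → ℝ := fun i => (g i).re with hvr
  set vi : Fin n → ℝ := fun i => (g i).im with hvi
  have hre : ∀ i, ((A.map (Complex.ofReal ·)).mulVec g i).re = A.mulVec vr i := by
    intro i
    rw [Matrix.mulVec, dotProduct, Complex.re_sum]
    apply Finset.sum_congr rfl
    intro j _
    simp [Matrix.map_apply]
    exact Or.inl rfl
  have him : ∀ i, ((A.map (Complex.ofReal ·)).mulVec g i).im = A.mulVec vi i := by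
    intro i
    rw [Matrix.mulVec, dotProduct, Complex.im_sum]
    apply Finset.sum_congr rfl
    intro j _
    simp [Matrix.map_apply]
    exact Or.inl rfl
  -- squared norms
  have hsq : ‖(WithLp.equiv 2 (Fin n → ℂ)).symm ((A.map (Complex.ofReal ·)).mulVec g)‖ ^ 2
      = ‖rVec (A.mulVec vr)‖ ^ 2 + ‖rVec (A.mulVec vi)‖ ^ 2 := by
    rw [rVec_norm_sq, rVec_norm_sq, EuclideanSpace.norm_eq, Real.sq_sqrt (by positivity),
      ← Finset.sum_add_distrib]
    apply Finset.sum_congr rfl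
    intro i _
    rw [WithLp.equiv_symm_apply, WithLp.ofLp_toLp, ← hre i, ← him i, Complex.sq_norm,
      Complex.normSq_apply]
    ring
  have hvsq : ‖v‖ ^ 2 = ‖rVec vr‖ ^ 2 + ‖rVec vi‖ ^ 2 := by
    rw [rVec_norm_sq, rVec_norm_sq, EuclideanSpace.norm_eq, Real.sq_sqrt (by positivity),
      ← Finset.sum_add_distrib]
    apply Finset.sum_congr rfl
    intro i _
    rw [show v i = g i from rfl, Complex.sq_norm, Complex.normSq_apply,
      hvr, hvi]
    ring
  have h1 := mulVec_R_norm_le A vr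
  have h2 := mulVec_R_norm_le A vi
  have hA : (0:ℝ) ≤ opNormR A := norm_nonneg _
  have hfin : ‖(WithLp.equiv 2 (Fin n → ℂ)).symm ((A.map (Complex.ofReal ·)).mulVec g)‖ ^ 2
      ≤ (opNormR A * ‖v‖) ^ 2 := by
    rw [hsq]
    have b1 : ‖rVec (A.mulVec vr)‖ ^ 2 ≤ (opNormR A) ^ 2 * ‖rVec vr‖ ^ 2 := by
      have := pow_le_pow_left₀ (norm_nonneg _) h1 2
      rw [mul_pow] at this; exact this
    have b2 : ‖rVec (A.mulVec vi)‖ ^ 2 ≤ (opNormR A) ^ 2 * ‖rVec vi‖ ^ 2 := by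
      have := pow_le_pow_left₀ (norm_nonneg _) h2 2
      rw [mul_pow] at this; exact this
    rw [mul_pow, hvsq]
    linarith
  have := Real.sqrt_le_sqrt hfin
  rwa [Real.sqrt_sq (norm_nonneg _), Real.sqrt_sq (by positivity)] at this

end plumbing2

section plumbing3
variable {n : ℕ} (x y : Fin n → ℝ) (μ : ℂ)

lemma rankOne_mulVec (g : Fin n → ℂ) :
    (μ⁻¹ • (Matrix.of fun i j => x i * y j : Matrix (Fin n) (Fin n) ℝ).map
      (Complex.ofReal ·)).mulVec g = fun i => (μ⁻¹ * ∑ j, (y j : ℂ) * g j) * (x i : ℂ) := by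
  funext i
  rw [Matrix.smul_mulVec, Pi.smul_apply, Matrix.mulVec, dotProduct, smul_eq_mul,
    Finset.mul_sum, mul_assoc, Finset.sum_mul, Finset.mul_sum]
  apply Finset.sum_congr rfl
  intro j _
  simp only [Matrix.map_apply, Matrix.of_apply]
  push_cast
  ring

lemma TP_apply (v : EuclideanSpace ℂ (Fin n)) :
    Matrix.toEuclideanCLM (𝕜 := ℂ)
      (μ⁻¹ • (Matrix.of fun i j => x i * y j : Matrix (Fin n) (Fin n) ℝ).map
        (Complex.ofReal ·)) v
    = (μ⁻¹ * ⟪cVec y, v⟫) • cVec x := by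
  rw [toEuclideanCLM_apply', rankOne_mulVec]
  ext i
  rw [WithLp.equiv_symm_apply, WithLp.ofLp_toLp, PiLp.smul_apply, smul_eq_mul]
  congr 1
  · congr 1
    rw [PiLp.inner_apply]
    apply Finset.sum_congr rfl
    intro j _
    simp only [cVec, WithLp.equiv_symm_apply, WithLp.ofLp_toLp, RCLike.inner_apply, Complex.conj_ofReal]
    exact mul_comm _ _

end plumbing3

section algebraAux
variable {A : Type*} [Ring A] [Algebra ℂ A]

lemma unit_aux (p : A) (hp : p * p = p) (z μ : ℂ) (hz : z ≠ 0) (hzμ : z - μ ≠ 0) :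
    (z • (1:A) - μ • p) * (z⁻¹ • (1:A) + (μ * z⁻¹ * (z - μ)⁻¹) • p) = 1 ∧
    (z⁻¹ • (1:A) + (μ * z⁻¹ * (z - μ)⁻¹) • p) * (z • (1:A) - μ • p) = 1 := by
  constructor
  · rw [sub_mul, mul_add, mul_add, smul_mul_smul_comm, smul_mul_smul_comm,
      smul_mul_smul_comm, smul_mul_smul_comm, one_mul, one_mul, mul_one, hp]
    rw [show (1:A) = (1:ℂ) • (1:A) by rw [one_smul]]
    match_scalars
    · field_simp
    · field_simp
      ring
  · rw [mul_sub, add_mul, add_mul, smul_mul_smul_comm, smul_mul_smul_comm,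
      smul_mul_smul_comm, smul_mul_smul_comm, one_mul, one_mul, mul_one, hp]
    rw [show (1:A) = (1:ℂ) • (1:A) by rw [one_smul]]
    match_scalars
    · field_simp
    · field_simp
      ring

lemma R_alt (p : A) (z μ : ℂ) (hz : z ≠ 0) (hzμ : z - μ ≠ 0) :
    z⁻¹ • ((1:A) - p) + (z - μ)⁻¹ • p =
      z⁻¹ • (1:A) + (μ * z⁻¹ * (z - μ)⁻¹) • p := by
  rw [smul_sub]
  rw [show z⁻¹ • (1:A) - z⁻¹ • p + (z - μ)⁻¹ • p
      = z⁻¹ • (1:A) + ((z-μ)⁻¹ - z⁻¹) • p by rw [sub_smul]; abel]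
  congr 2
  rw [inv_sub_inv hzμ hz, sub_sub_cancel, div_eq_mul_inv, mul_inv]
  ring

end algebraAux

lemma numeric_aux (k h a b ε : ℝ) (hk : 1 ≤ k) (hh : 0 ≤ h) (hε : ε = 2*k^2*h)
    (ha : ε < a) (hb : ε < b) : (a⁻¹ * k + b⁻¹ * k) * h < 1 := by
  have hk0 : (0:ℝ) < k := lt_of_lt_of_le one_pos hk
  rcases eq_or_lt_of_le hh with h0 | hpos
  · rw [← h0]
    norm_num
  · have hε0 : 0 < ε := by rw [hε]; positivity
    have ha0 : 0 < a := lt_trans hε0 ha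
    have hb0 : 0 < b := lt_trans hε0 hb
    have h1 : a⁻¹ < ε⁻¹ := by exact inv_strictAnti₀ hε0 ha
    have h2 : b⁻¹ < ε⁻¹ := by exact inv_strictAnti₀ hε0 hb
    have h3 : (a⁻¹ * k + b⁻¹ * k) * h < (ε⁻¹ * k + ε⁻¹ * k) * h := by
      apply mul_lt_mul_of_pos_right _ hpos
      have := mul_lt_mul_of_pos_right h1 hk0
      have := mul_lt_mul_of_pos_right h2 hk0
      linarith
    have h4 : (ε⁻¹ * k + ε⁻¹ * k) * h = k⁻¹ := by
      rw [hε]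
      field_simp
      ring
    rw [h4] at h3
    calc (a⁻¹ * k + b⁻¹ * k) * h < k⁻¹ := h3
      _ ≤ 1 := by rw [inv_le_one_iff₀]; right; exact hk

set_option maxHeartbeats 2000000 in
set_option synthInstance.maxHeartbeats 400000 in
/-- Rank-one perturbation lemma: every (complex) eigenvalue of `M + H`, where
`M = x yᵀ` with `μ = ⟨x,y⟩ ≠ 0`, lies in `B(0,ε) ∪ B(μ,ε)` with
`ε = 2 ‖x‖² ‖y‖² μ⁻² ‖H‖`. -/
theorem rank_one_perturbation {n : ℕ} (x y : Fin n → ℝ) (hx : x ≠ 0) (hy : y ≠ 0)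
    (H : Matrix (Fin n) (Fin n) ℝ)
    (μ : ℝ) (hμ : μ = ∑ i, x i * y i) (hμ0 : μ ≠ 0)
    (M : Matrix (Fin n) (Fin n) ℝ) (hM : M = Matrix.of fun i j => x i * y j)
    (ε : ℝ) (hε : ε = 2 * eNorm x ^ 2 * eNorm y ^ 2 * μ⁻¹ ^ 2 * opNormR H)
    (z : ℂ) (hz : z ∈ spectrum ℂ ((M + H).map (Complex.ofReal ·))) :
    z ∈ Metric.closedBall (0 : ℂ) ε ∨ z ∈ Metric.closedBall (μ : ℂ) ε := by
  by_contra hcon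
  push_neg at hcon
  obtain ⟨h0, hμball⟩ := hcon
  rw [Metric.mem_closedBall, not_le, dist_eq_norm, sub_zero] at h0
  rw [Metric.mem_closedBall, not_le, dist_eq_norm] at hμball
  -- basic quantities
  set μc : ℂ := (μ : ℂ) with hμc_def
  have hμc0 : μc ≠ 0 := by simpa [hμc_def] using hμ0
  set nx : ℝ := eNorm x with hnx_def
  set ny : ℝ := eNorm y with hny_def
  set h : ℝ := opNormR H with hh_def
  have hh0 : 0 ≤ h := norm_nonneg _
  -- inner product fact
  have hinner : ⟪cVec y, cVec x⟫ = μc := by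
    rw [cVec_inner, hμc_def, hμ]
    norm_cast
    exact Finset.sum_congr rfl fun i _ => mul_comm _ _
  have hnormμ : ‖μc‖ = |μ| := by rw [hμc_def, Complex.norm_real, Real.norm_eq_abs]
  have hμabs : (0:ℝ) < |μ| := abs_pos.mpr hμ0
  set k : ℝ := nx * ny / |μ| with hk_def
  have hcs : |μ| ≤ nx * ny := by
    have := norm_inner_le_norm (𝕜 := ℂ) (cVec y) (cVec x)
    rw [hinner, hnormμ, cVec_norm, cVec_norm] at this
    calc |μ| ≤ eNorm y * eNorm x := this
      _ = nx * ny := by rw [mul_comm, hnx_def, hny_def]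
  have hk1 : 1 ≤ k := by
    rw [hk_def, le_div_iff₀ hμabs, one_mul]
    exact hcs
  have hk0 : (0:ℝ) < k := lt_of_lt_of_le one_pos hk1
  -- ε ≥ 0 and ε = 2 k^2 h
  have hε2 : ε = 2 * k ^ 2 * h := by
    rw [hε, hk_def, div_pow, mul_pow, _root_.sq_abs]
    ring
  have hε0 : 0 ≤ ε := by
    rw [hε2]; positivity
  have ha : ε < ‖z‖ := h0
  have hb : ε < ‖z - μc‖ := hμball
  have hz0 : z ≠ 0 := by
    intro hzz; rw [hzz, norm_zero] at ha; exact absurd (lt_of_le_of_lt hε0 ha) (lt_irrefl 0)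
  have hzμ : z - μc ≠ 0 := by
    intro hzz; rw [hzz, norm_zero] at hb; exact absurd (lt_of_le_of_lt hε0 hb) (lt_irrefl 0)
  -- matrices over ℂ
  set Mc : Matrix (Fin n) (Fin n) ℂ := M.map (Complex.ofReal ·) with hMc_def
  set Hc : Matrix (Fin n) (Fin n) ℂ := H.map (Complex.ofReal ·) with hHc_def
  set Pm : Matrix (Fin n) (Fin n) ℂ := μc⁻¹ • Mc with hPm_def
  have hMcP : μc • Pm = Mc := by
    rw [hPm_def, smul_smul, mul_inv_cancel₀ hμc0, one_smul]
  -- idempotency of Pm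
  have hPP : Pm * Pm = Pm := by
    ext i j
    rw [hPm_def, hMc_def, hM]
    simp only [Matrix.smul_apply, Matrix.mul_apply, Matrix.map_apply, Matrix.of_apply,
      smul_eq_mul]
    push_cast
    have hsum : (∑ l, (y l : ℂ) * (x l : ℂ)) = μc := by
      rw [hμc_def, hμ]
      norm_cast
      exact Finset.sum_congr rfl fun i _ => mul_comm _ _
    have hterm : ∀ l : Fin n, μc⁻¹ * ((x i : ℂ) * (y l : ℂ)) * (μc⁻¹ * ((x l : ℂ) * (y j : ℂ)))
        = (μc⁻¹ * μc⁻¹ * ((x i : ℂ) * (y j : ℂ))) * ((y l : ℂ) * (x l : ℂ)) := by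
      intro l; ring
    rw [Finset.sum_congr rfl fun l _ => hterm l, ← Finset.mul_sum, hsum]
    field_simp
  -- operator norms
  have hPnorm : ‖Matrix.toEuclideanCLM (𝕜 := ℂ) Pm‖ ≤ k := by
    apply ContinuousLinearMap.opNorm_le_bound _ (le_of_lt hk0)
    intro v
    rw [hPm_def, hMc_def, hM, TP_apply, norm_smul, norm_mul, norm_inv, hnormμ,
      cVec_norm, ← hnx_def]
    have h1 : ‖⟪cVec y, v⟫‖ ≤ ny * ‖v‖ := by
      have := norm_inner_le_norm (𝕜 := ℂ) (cVec y) v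
      rwa [cVec_norm, ← hny_def] at this
    rw [hk_def]
    have hnx0 : (0:ℝ) ≤ nx := Real.sqrt_nonneg _
    calc |μ|⁻¹ * ‖⟪cVec y, v⟫‖ * nx ≤ |μ|⁻¹ * (ny * ‖v‖) * nx := by
          apply mul_le_mul_of_nonneg_right _ hnx0
          exact mul_le_mul_of_nonneg_left h1 (by positivity)
      _ = nx * ny / |μ| * ‖v‖ := by field_simp
  have hQnorm : ‖1 - Matrix.toEuclideanCLM (𝕜 := ℂ) Pm‖ ≤ k := by
    apply ContinuousLinearMap.opNorm_le_bound _ (le_of_lt hk0)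
    intro v
    rw [ContinuousLinearMap.sub_apply, ContinuousLinearMap.one_apply,
      hPm_def, hMc_def, hM, TP_apply]
    have := oblique_norm_le (cVec x) (cVec y) μc hinner hμc0 v
    rw [cVec_norm, cVec_norm, hnormμ, ← hnx_def, ← hny_def] at this
    rwa [hk_def]
  have hHnorm : ‖Matrix.toEuclideanCLM (𝕜 := ℂ) Hc‖ ≤ h := by
    rw [hHc_def, hh_def]; exact cMat_norm_le H
  -- the resolvent candidate
  set R : Matrix (Fin n) (Fin n) ℂ :=
    z⁻¹ • (1 : Matrix (Fin n) (Fin n) ℂ) + (μc * z⁻¹ * (z - μc)⁻¹) • Pm with hR_def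
  set S : Matrix (Fin n) (Fin n) ℂ := z • (1 : Matrix (Fin n) (Fin n) ℂ) - Mc with hS_def
  obtain ⟨hSR, hRS⟩ := unit_aux Pm hPP z μc hz0 hzμ
  rw [hMcP] at hSR hRS
  have hSunit : IsUnit S := ⟨⟨S, R, hSR, hRS⟩, rfl⟩
  -- norm bound on R * Hc through the CLM algebra
  set T := Matrix.toEuclideanCLM (𝕜 := ℂ) (n := Fin n) with hT_def
  have hTR : T R = z⁻¹ • ((1 : EuclideanSpace ℂ (Fin n) →L[ℂ] EuclideanSpace ℂ (Fin n)) - T Pm) + (z - μc)⁻¹ • T Pm := by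
    rw [hR_def, ← R_alt (Pm) z μc hz0 hzμ]
    rw [map_add, _root_.map_smul, _root_.map_smul, _root_.map_sub, _root_.map_one]
  have hTRnorm : ‖T R‖ ≤ ‖z‖⁻¹ * k + ‖z - μc‖⁻¹ * k := by
    rw [hTR]
    refine le_trans (norm_add_le _ _) ?_
    rw [norm_smul z⁻¹ ((1 : EuclideanSpace ℂ (Fin n) →L[ℂ] EuclideanSpace ℂ (Fin n)) - T Pm),
      norm_smul (z - μc)⁻¹ (T Pm), norm_inv, norm_inv]
    have e1 : (0:ℝ) ≤ ‖z‖⁻¹ := by positivity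
    have e2 : (0:ℝ) ≤ ‖z - μc‖⁻¹ := by positivity
    exact add_le_add (mul_le_mul_of_nonneg_left hQnorm e1)
      (mul_le_mul_of_nonneg_left hPnorm e2)
  have hsmall : ‖T R * T Hc‖ < 1 := by
    calc ‖T R * T Hc‖ ≤ ‖T R‖ * ‖T Hc‖ := norm_mul_le _ _
      _ ≤ (‖z‖⁻¹ * k + ‖z - μc‖⁻¹ * k) * h := by
          apply mul_le_mul hTRnorm hHnorm (norm_nonneg _)
          positivity
      _ < 1 := numeric_aux k h ‖z‖ ‖z - μc‖ ε hk1 hh0 hε2 ha hb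
  -- invertibility of 1 - R * Hc
  have hTunit : IsUnit (T (1 - R * Hc)) := by
    rw [_root_.map_sub, _root_.map_one, _root_.map_mul]
    exact (Units.oneSub _ hsmall).isUnit
  have hunit2 : IsUnit (1 - R * Hc) := by
    have := hTunit.map (Matrix.toEuclideanCLM (𝕜 := ℂ) (n := Fin n)).symm
    rwa [StarAlgEquiv.symm_apply_apply] at this
  -- factorization
  have hfact : algebraMap ℂ (Matrix (Fin n) (Fin n) ℂ) z - (Mc + Hc)
      = S * (1 - R * Hc) := by
    rw [mul_sub, mul_one, ← mul_assoc, hSR, one_mul, Algebra.algebraMap_eq_smul_one,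
      hS_def]
    abel
  -- contradiction with spectrum membership
  rw [spectrum.mem_iff] at hz
  apply hz
  have hmap : (M + H).map (Complex.ofReal ·) = Mc + Hc := by
    rw [hMc_def, hHc_def]
    exact Matrix.map_add _ (by push_cast; exact fun _ _ => rfl) _ _
  rw [hmap, hfact]
  exact hSunit.mul hunit2
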